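/- Let p be a prime, s a positive integer, q = p^s, R = Z_q[u]/(u^2), and n a positive integer with gcd(n, p) = 1. Then there exist a positive integer t and monic polynomials f_1, …, f_t ∈ R[X] that are pairwise coprime (in the Bézout sense: for l ≠ l' there exist a, b ∈ R[X] with a·f_l + b·f_{l'} = 1), each of whose reductions modulo (p,u) is irreducible in F_p[X], such that X^n − 1 = f_1 f_2 ⋯ f_t in R[X]. -/

import Mathlib

open Polynomial

/-- The reduction map `R = Z_q[u]/(u^2) → F_p` sending `a + b·u` to `a mod p`. -/
noncomputable def dualRed (p s : ℕ) (hs : 0 < s) :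
    DualNumber (ZMod (p ^ s)) →+* ZMod p :=
  (ZMod.castHom (dvd_pow_self p hs.ne') (ZMod p)).comp
    (TrivSqZeroExt.fstHom (ZMod (p ^ s)) (ZMod (p ^ s)) (ZMod (p ^ s))).toRingHom

open TrivSqZeroExt

set_option linter.unusedSectionVars false
set_option linter.unnecessarySimpa false


variable {A : Type*} [CommRing A]

lemma coeffMem_mul_right {I : Ideal A} {p q : A[X]} (hq : ∀ i, q.coeff i ∈ I) :
    ∀ i, (p * q).coeff i ∈ I := by
  intro i; rw [coeff_mul]
  exact Ideal.sum_mem _ fun c _ => I.mul_mem_left _ (hq c.2)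

lemma coeffMem_mul_sq {I : Ideal A} {p q : A[X]} (hp : ∀ i, p.coeff i ∈ I)
    (hq : ∀ i, q.coeff i ∈ I) : ∀ i, (p * q).coeff i ∈ I * I := by
  intro i; rw [coeff_mul]
  exact Ideal.sum_mem _ fun c _ => Ideal.mul_mem_mul (hp c.1) (hq c.2)

lemma map_mk_eq_zero_iff {I : Ideal A} {p : A[X]} :
    p.map (Ideal.Quotient.mk I) = 0 ↔ ∀ i, p.coeff i ∈ I := by
  simp [Polynomial.ext_iff, coeff_map, Ideal.Quotient.eq_zero_iff_mem]

/-- One step of Hensel lifting: improve a factorization mod `I` to one mod `I*I`. -/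
lemma hensel_step [Nontrivial A] (I : Ideal A) (F G0 H0 u v : A[X])
    (hF : F.Monic) (hG0 : G0.Monic) (hH0 : H0.Monic)
    (hdeg : G0.natDegree + H0.natDegree = F.natDegree)
    (hbez : u * G0 + v * H0 = 1)
    (hE : ∀ i, (F - G0 * H0).coeff i ∈ I) :
    ∃ G H : A[X], G.Monic ∧ H.Monic ∧ G.natDegree = G0.natDegree ∧
      H.natDegree = H0.natDegree ∧ (∀ i, (G - G0).coeff i ∈ I) ∧
      (∀ i, (H - H0).coeff i ∈ I) ∧ (∀ i, (F - G * H).coeff i ∈ I * I) := by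
  set E : A[X] := F - G0 * H0 with hEdef
  set ρ : A[X] := (u * E) %ₘ H0 with hρ
  set qq : A[X] := (u * E) /ₘ H0 with hq
  have hdiv : ρ + H0 * qq = u * E := modByMonic_add_div (u * E) H0
  set δg : A[X] := v * E + qq * G0 with hδg
  -- the key algebraic identity
  have key : G0 * ρ + H0 * δg = E := by
    have : E * (u * G0 + v * H0) = E * 1 := by rw [hbez]
    linear_combination G0 * hdiv + this
  -- memberships
  have hρmem : ∀ i, ρ.coeff i ∈ I := by
    rw [← map_mk_eq_zero_iff, map_modByMonic _ hH0,
      map_mk_eq_zero_iff.2 (coeffMem_mul_right hE), zero_modByMonic]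
  have hqmem : ∀ i, qq.coeff i ∈ I := by
    rw [← map_mk_eq_zero_iff, map_divByMonic _ hH0,
      map_mk_eq_zero_iff.2 (coeffMem_mul_right hE), zero_divByMonic]
  have hδgmem : ∀ i, δg.coeff i ∈ I := by
    intro i
    rw [hδg, coeff_add]
    exact I.add_mem (coeffMem_mul_right hE i)
      ((mul_comm qq G0) ▸ coeffMem_mul_right hqmem i)
  -- degrees
  have hFne : F ≠ 0 := hF.ne_zero
  have hdegF : F.degree = ((G0.natDegree + H0.natDegree : ℕ) : WithBot ℕ) := by
    rw [hdeg, degree_eq_natDegree hF.ne_zero]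
  have hdegG0H0 : (G0 * H0).degree = ((G0.natDegree + H0.natDegree : ℕ) : WithBot ℕ) := by
    rw [degree_eq_natDegree (hG0.mul hH0).ne_zero, hG0.natDegree_mul hH0]

  have hEdeg : E.degree < F.degree := by
    rw [hEdef]
    apply degree_sub_lt (by rw [hdegF, hdegG0H0]) hFne
    rw [hF.leadingCoeff, (hG0.mul hH0).leadingCoeff]
  have hρdeg : ρ.degree < H0.degree := degree_modByMonic_lt _ hH0
  have hδgdeg : δg.degree < G0.degree := by
    have h1 : (H0 * δg).degree = H0.degree + δg.degree := by
      rw [mul_comm H0 δg, Monic.degree_mul hH0, add_comm]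
    have h2 : H0 * δg = E - G0 * ρ := by linear_combination key
    have h3 : (E - G0 * ρ).degree < F.degree := by
      apply lt_of_le_of_lt (degree_sub_le _ _)
      rw [max_lt_iff]
      refine ⟨hEdeg, ?_⟩
      calc (G0 * ρ).degree = G0.degree + ρ.degree := by
            rw [mul_comm G0 ρ, Monic.degree_mul hG0, add_comm]
        _ < G0.degree + H0.degree := by
            apply WithBot.add_lt_add_left _ hρdeg
            rw [degree_eq_natDegree hG0.ne_zero]; exact WithBot.coe_ne_bot
        _ = F.degree := by
            rw [degree_eq_natDegree hG0.ne_zero, degree_eq_natDegree hH0.ne_zero, hdegF]; push_cast; ring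
    have h4 : H0.degree + δg.degree < H0.degree + G0.degree := by
      rw [← h1, h2]
      calc (E - G0 * ρ).degree < F.degree := h3
        _ = H0.degree + G0.degree := by
            rw [degree_eq_natDegree hG0.ne_zero, degree_eq_natDegree hH0.ne_zero, hdegF]; push_cast; ring
    exact lt_of_add_lt_add_left h4
  refine ⟨G0 + δg, H0 + ρ, hG0.add_of_left hδgdeg, hH0.add_of_left hρdeg, ?_, ?_, ?_, ?_, ?_⟩
  · rw [natDegree_add_eq_left_of_degree_lt hδgdeg]
  · rw [natDegree_add_eq_left_of_degree_lt hρdeg]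
  · intro i; simpa using hδgmem i
  · intro i; simpa using hρmem i
  · have : F - (G0 + δg) * (H0 + ρ) = -(δg * ρ) := by
      linear_combination -key
    rw [this]
    intro i
    rw [coeff_neg]
    exact neg_mem (coeffMem_mul_sq hδgmem hρmem i)

/-- Iterated Hensel lifting: if `I^(2^k) = ⊥`, an approximate factorization mod `I`
lifts to an exact one. -/
lemma hensel_iter [Nontrivial A] (J : Ideal A) (hJnil : ∀ x ∈ J, IsNilpotent x) :
    ∀ (k : ℕ) (I : Ideal A), I ≤ J → I ^ (2 ^ k) = ⊥ →
    ∀ (F G0 H0 u v : A[X]), F.Monic → G0.Monic → H0.Monic →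
    G0.natDegree + H0.natDegree = F.natDegree → u * G0 + v * H0 = 1 →
    (∀ i, (F - G0 * H0).coeff i ∈ I) →
    ∃ G H : A[X], G.Monic ∧ H.Monic ∧ (∀ i, (G - G0).coeff i ∈ I) ∧
      (∀ i, (H - H0).coeff i ∈ I) ∧ F = G * H := by
  intro k
  induction k with
  | zero =>
    intro I _ hI F G0 H0 u v hF hG0 hH0 hdeg hbez hE
    refine ⟨G0, H0, hG0, hH0, by simp, by simp, ?_⟩
    have hIb : I = ⊥ := by simpa using hI
    have : F - G0 * H0 = 0 := by
      ext i
      simpa using (by rw [← hIb]; exact hE i : (F - G0 * H0).coeff i ∈ (⊥ : Ideal A))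
    exact sub_eq_zero.mp this
  | succ k ih =>
    intro I hIJ hI F G0 H0 u v hF hG0 hH0 hdeg hbez hE
    obtain ⟨G1, H1, hG1, hH1, hdG1, hdH1, hG1m, hH1m, hE2⟩ :=
      hensel_step I F G0 H0 u v hF hG0 hH0 hdeg hbez hE
    -- new Bézout relation
    have hr : ∀ i, (u * G1 + v * H1 - 1).coeff i ∈ I := by
      have : u * G1 + v * H1 - 1 = u * (G1 - G0) + v * (H1 - H0) := by
        linear_combination hbez
      rw [this]
      intro i
      rw [coeff_add]
      exact I.add_mem (coeffMem_mul_right hG1m i) (coeffMem_mul_right hH1m i)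
    have hrnil : IsNilpotent (u * G1 + v * H1 - 1) := by
      rw [Polynomial.isNilpotent_iff]
      exact fun i => hJnil _ (hIJ (hr i))
    obtain ⟨w, hw⟩ := (hrnil.isUnit_one_add).exists_left_inv
    have hbez' : (w * u) * G1 + (w * v) * H1 = 1 := by
      have : w * (1 + (u * G1 + v * H1 - 1)) = 1 := hw
      linear_combination this
    have hI2 : (I * I) ^ 2 ^ k = ⊥ := by
      rw [← hI, ← sq, ← pow_mul, pow_succ, mul_comm (2^k) 2]
    obtain ⟨G, H, hG, hH, hGm, hHm, hprod⟩ :=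
      ih (I * I) (le_trans Ideal.mul_le_left hIJ) hI2 F G1 H1 (w * u) (w * v)
        hF hG1 hH1 (by rw [hdG1, hdH1]; exact hdeg) hbez' hE2
    refine ⟨G, H, hG, hH, ?_, ?_, hprod⟩
    · intro i
      have : G - G0 = (G - G1) + (G1 - G0) := by ring
      rw [this, coeff_add]
      exact I.add_mem (Ideal.mul_le_left (hGm i)) (hG1m i)
    · intro i
      have : H - H0 = (H - H1) + (H1 - H0) := by ring
      rw [this, coeff_add]
      exact I.add_mem (Ideal.mul_le_left (hHm i)) (hH1m i)

variable {B : Type*} [CommRing B]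

/-- Lift a Bézout relation through a surjective hom with nil kernel. -/
lemma bezout_lift (φ : A →+* B) (hsur : Function.Surjective φ)
    (hnil : ∀ x ∈ RingHom.ker φ, IsNilpotent x) (G H : A[X])
    (hco : IsCoprime (G.map φ) (H.map φ)) : ∃ u v : A[X], u * G + v * H = 1 := by
  obtain ⟨a, b, hab⟩ := hco
  obtain ⟨u0, hu0⟩ := Polynomial.map_surjective φ hsur a
  obtain ⟨v0, hv0⟩ := Polynomial.map_surjective φ hsur b
  have hrmap : (u0 * G + v0 * H - 1).map φ = 0 := by
    rw [Polynomial.map_sub, Polynomial.map_add, Polynomial.map_mul, Polynomial.map_mul,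
      Polynomial.map_one, hu0, hv0, hab, sub_self]
  have hrnil : IsNilpotent (u0 * G + v0 * H - 1) := by
    rw [Polynomial.isNilpotent_iff]
    intro i
    apply hnil
    rw [RingHom.mem_ker, ← coeff_map, hrmap, coeff_zero]
  obtain ⟨w, hw⟩ := (hrnil.isUnit_one_add).exists_left_inv
  exact ⟨w * u0, w * v0, by linear_combination hw⟩

/-- Hensel lifting of a coprime factorization into two monic factors. -/
lemma hensel_pair [Nontrivial A] [Nontrivial B] (φ : A →+* B) (hsur : Function.Surjective φ)
    (k : ℕ) (hker : (RingHom.ker φ) ^ (2 ^ k) = ⊥)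
    (F : A[X]) (hF : F.Monic) (g h : B[X]) (hg : g.Monic) (hh : h.Monic)
    (hco : IsCoprime g h) (hfac : F.map φ = g * h) :
    ∃ G H : A[X], G.Monic ∧ H.Monic ∧ G.map φ = g ∧ H.map φ = h ∧ F = G * H := by
  have hnil : ∀ x ∈ RingHom.ker φ, IsNilpotent x := by
    intro x hx
    exact ⟨2 ^ k, by simpa [hker] using Ideal.pow_mem_pow hx (2 ^ k)⟩
  -- lift g and h to monic polynomials
  have hlift : ∀ c : B[X], c.Monic → ∃ C : A[X], C.map φ = c ∧ C.Monic ∧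
      C.natDegree = c.natDegree := by
    intro c hc
    have hmem : c ∈ Polynomial.lifts φ := by
      rw [Polynomial.lifts_iff_coeff_lifts]
      exact fun i => hsur _
    obtain ⟨C, hC1, hC2, hC3⟩ := Polynomial.lifts_and_degree_eq_and_monic hmem hc
    exact ⟨C, hC1, hC3, natDegree_eq_of_degree_eq hC2⟩
  obtain ⟨G0, hG0map, hG0, hG0deg⟩ := hlift g hg
  obtain ⟨H0, hH0map, hH0, hH0deg⟩ := hlift h hh
  have hdeg : G0.natDegree + H0.natDegree = F.natDegree := by
    rw [hG0deg, hH0deg, ← hg.natDegree_mul hh, ← hfac, hF.natDegree_map]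
  obtain ⟨u, v, hbez⟩ := bezout_lift φ hsur hnil G0 H0
    (by rw [hG0map, hH0map]; exact hco)
  have hE : ∀ i, (F - G0 * H0).coeff i ∈ RingHom.ker φ := by
    intro i
    rw [RingHom.mem_ker, ← coeff_map]
    rw [Polynomial.map_sub, Polynomial.map_mul, hG0map, hH0map, hfac, sub_self, coeff_zero]
  obtain ⟨G, H, hG, hH, hGm, hHm, hprod⟩ :=
    hensel_iter (RingHom.ker φ) hnil k (RingHom.ker φ) le_rfl hker F G0 H0 u v
      hF hG0 hH0 hdeg hbez hE
  have hmapeq : ∀ P P0 : A[X], (∀ i, (P - P0).coeff i ∈ RingHom.ker φ) →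
      P.map φ = P0.map φ := by
    intro P P0 hP
    have : (P - P0).map φ = 0 := by
      ext i
      rw [coeff_map, coeff_zero, ← RingHom.mem_ker]
      exact hP i
    rw [Polynomial.map_sub, sub_eq_zero] at this
    exact this
  exact ⟨G, H, hG, hH, by rw [hmapeq G G0 hGm, hG0map], by rw [hmapeq H H0 hHm, hH0map], hprod⟩

lemma isCoprime_list_prod {a : B[X]} : ∀ {L : List (Polynomial B)},
    (∀ x ∈ L, IsCoprime a x) → IsCoprime a L.prod := by
  intro L
  induction L with
  | nil => intro _; simpa using isCoprime_one_right
  | cons x L ih =>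
    intro h
    rw [List.prod_cons]
    exact (h x (by simp)).mul_right (ih fun y hy => h y (by simp [hy]))

lemma monic_list_prod : ∀ {L : List (Polynomial B)}, (∀ x ∈ L, Monic x) → Monic L.prod := by
  intro L
  induction L with
  | nil => intro _; simpa using monic_one
  | cons x L ih =>
    intro h
    rw [List.prod_cons]
    exact (h x (by simp)).mul (ih fun y hy => h y (by simp [hy]))

/-- Hensel lifting of a factorization into pairwise coprime monic factors. -/
lemma hensel_list [Nontrivial A] [Nontrivial B] (φ : A →+* B) (hsur : Function.Surjective φ)
    (k : ℕ) (hker : (RingHom.ker φ) ^ (2 ^ k) = ⊥) :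
    ∀ (L : List (Polynomial B)) (F : A[X]), F.Monic → (∀ g ∈ L, g.Monic) →
    L.Pairwise IsCoprime → F.map φ = L.prod →
    ∃ M : List A[X], List.Forall₂ (fun G g => G.Monic ∧ G.map φ = g) M L ∧ F = M.prod := by
  intro L
  induction L with
  | nil =>
    intro F hF _ _ hfac
    refine ⟨[], List.Forall₂.nil, ?_⟩
    rw [List.prod_nil] at hfac ⊢
    rw [← hF.natDegree_eq_zero, ← hF.natDegree_map (f := φ), hfac, natDegree_one]
  | cons g L ih =>
    intro F hF hmon hpair hfac
    rw [List.prod_cons] at hfac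
    have hLmon : ∀ x ∈ L, Monic x := fun x hx => hmon x (by simp [hx])
    obtain ⟨G, H, hG, hH, hGmap, hHmap, hFGH⟩ :=
      hensel_pair φ hsur k hker F hF g L.prod (hmon g (by simp)) (monic_list_prod hLmon)
        (isCoprime_list_prod fun y hy => (List.pairwise_cons.mp hpair).1 y hy) hfac
    obtain ⟨M, hM, hHM⟩ := ih H hH hLmon (List.pairwise_cons.mp hpair).2 hHmap
    exact ⟨G :: M, List.Forall₂.cons ⟨hG, hGmap⟩ hM, by rw [List.prod_cons, hFGH, hHM]⟩


section facts
variable (p s : ℕ) [Fact p.Prime]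

lemma pq_one_lt (hs : 0 < s) : 1 < p ^ s :=
  Nat.one_lt_pow hs.ne' (Fact.out : p.Prime).one_lt

lemma dualRed_surjective (hs : 0 < s) : Function.Surjective (dualRed p s hs) := by
  haveI : NeZero (p ^ s) := ⟨(Nat.zero_lt_of_lt (pq_one_lt p s hs)).ne'⟩
  intro y
  refine ⟨TrivSqZeroExt.inl ((y.val : ℕ) : ZMod (p ^ s)), ?_⟩
  rw [dualRed]
  simp [ZMod.natCast_val, ZMod.cast_id]

/-- ker(dualRed) is contained in the span of `p` and `ε`. -/
lemma ker_dualRed_le (hs : 0 < s) :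
    RingHom.ker (dualRed p s hs) ≤
      Ideal.span {((p : DualNumber (ZMod (p ^ s)))), DualNumber.eps} := by
  haveI : NeZero (p ^ s) := ⟨(Nat.zero_lt_of_lt (pq_one_lt p s hs)).ne'⟩
  haveI : NeZero p := ⟨(Fact.out : p.Prime).pos.ne'⟩
  intro x hx
  rw [RingHom.mem_ker] at hx
  have hfst : (ZMod.castHom (dvd_pow_self p hs.ne') (ZMod p)) (fst x) = 0 := hx
  -- p divides fst x
  have hval : ((fst x).val : ZMod p) = 0 := by
    have h1 : fst x = (((fst x).val : ℕ) : ZMod (p ^ s)) := by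
      rw [ZMod.natCast_val, ZMod.cast_id]
    rw [h1, map_natCast] at hfst
    exact hfst
  obtain ⟨m, hm⟩ : p ∣ (fst x).val := (ZMod.natCast_eq_zero_iff _ _).mp hval
  have hfx : fst x = (p : ZMod (p ^ s)) * (m : ZMod (p ^ s)) := by
    rw [← Nat.cast_mul, ← hm, ZMod.natCast_val, ZMod.cast_id]
  have hxdecomp : x = TrivSqZeroExt.inl (fst x) + TrivSqZeroExt.inr (snd x) :=
    (TrivSqZeroExt.inl_fst_add_inr_snd_eq x).symm
  rw [hxdecomp]
  apply Ideal.add_mem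
  · have : TrivSqZeroExt.inl (R := ZMod (p^s)) (M := ZMod (p^s)) (fst x)
        = (p : DualNumber (ZMod (p ^ s))) * TrivSqZeroExt.inl ((m : ZMod (p ^ s))) := by
      rw [hfx, TrivSqZeroExt.inl_mul, TrivSqZeroExt.inl_natCast]
    rw [this]
    exact Ideal.mul_mem_right _ _ (Ideal.subset_span (by simp))
  · have : TrivSqZeroExt.inr (R := ZMod (p^s)) (M := ZMod (p^s)) (snd x)
        = TrivSqZeroExt.inl (snd x) * DualNumber.eps := by
      rw [DualNumber.eps, TrivSqZeroExt.inl_mul_inr, smul_eq_mul, mul_one]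
    rw [this]
    exact Ideal.mul_mem_left _ _ (Ideal.subset_span (by simp))

lemma span_pu_pow_eq_bot :
    (Ideal.span {((p : DualNumber (ZMod (p ^ s)))), DualNumber.eps}) ^ (s + 2) = ⊥ := by
  rw [show ({((p : DualNumber (ZMod (p ^ s)))), DualNumber.eps} :
      Set (DualNumber (ZMod (p ^ s)))) = insert (p : DualNumber (ZMod (p ^ s))) {DualNumber.eps}
      from rfl, Ideal.span_insert]
  refine le_bot_iff.mp (le_trans Ideal.sup_pow_add_le_pow_sup_pow ?_)
  have h1 : (p : DualNumber (ZMod (p ^ s))) ^ s = 0 := by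
    have : ((p ^ s : ℕ) : DualNumber (ZMod (p ^ s))) = TrivSqZeroExt.inl
        ((p ^ s : ℕ) : ZMod (p ^ s)) := (TrivSqZeroExt.inl_natCast _).symm
    rw [← Nat.cast_pow, this, ZMod.natCast_self, TrivSqZeroExt.inl_zero]
  have h2 : (DualNumber.eps : DualNumber (ZMod (p ^ s))) ^ 2 = 0 := by
    rw [sq, DualNumber.eps_mul_eps]
  rw [Ideal.span_singleton_pow, Ideal.span_singleton_pow, h1, h2]
  simp [Ideal.span_singleton_eq_bot.mpr]

lemma ker_dualRed_pow_eq_bot (hs : 0 < s) :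
    (RingHom.ker (dualRed p s hs)) ^ (2 ^ (s + 2)) = ⊥ := by
  refine le_bot_iff.mp (le_trans ?_ (le_of_eq (span_pu_pow_eq_bot p s)))
  calc (RingHom.ker (dualRed p s hs)) ^ (2 ^ (s + 2))
      ≤ (Ideal.span {((p : DualNumber (ZMod (p ^ s)))), DualNumber.eps}) ^ (2 ^ (s + 2)) :=
        Ideal.pow_right_mono (ker_dualRed_le p s hs) _
    _ ≤ (Ideal.span {((p : DualNumber (ZMod (p ^ s)))), DualNumber.eps}) ^ (s + 2) :=
        Ideal.pow_le_pow_right (le_of_lt (Nat.lt_two_pow_self))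

end facts


theorem xn_sub_one_factors_basic_irreducible (p s n : ℕ) [Fact p.Prime] (hs : 0 < s)
    (hn : 0 < n) (hcop : Nat.gcd n p = 1) :
    ∃ (t : ℕ), 0 < t ∧ ∃ f : Fin t → Polynomial (DualNumber (ZMod (p ^ s))),
      (∀ l, (f l).Monic) ∧
      (∀ l, Irreducible ((f l).map (dualRed p s hs))) ∧
      (∀ l l', l ≠ l' → ∃ a b : Polynomial (DualNumber (ZMod (p ^ s))),
        a * f l + b * f l' = 1) ∧
      (X ^ n - 1 : Polynomial (DualNumber (ZMod (p ^ s)))) = ∏ l, f l := by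
  classical
  haveI : Fact (1 < p ^ s) := ⟨pq_one_lt p s hs⟩
  haveI : NeZero p := ⟨(Fact.out : p.Prime).pos.ne'⟩
  set A := DualNumber (ZMod (p ^ s))
  set B := ZMod p
  set φ := dualRed p s hs with hφ
  have hsur : Function.Surjective φ := dualRed_surjective p s hs
  have hker : (RingHom.ker φ) ^ (2 ^ (s + 2)) = ⊥ := ker_dualRed_pow_eq_bot p s hs
  have hnil : ∀ x ∈ RingHom.ker φ, IsNilpotent x := by
    intro x hx
    exact ⟨2 ^ (s + 2), by simpa [hker] using Ideal.pow_mem_pow hx (2 ^ (s + 2))⟩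
  -- the polynomial and its reduction
  set F : A[X] := X ^ n - 1 with hFdef
  have hF : F.Monic := by
    have := monic_X_pow_sub_C (1 : A) hn.ne'
    rwa [map_one] at this
  set fbar : B[X] := X ^ n - 1 with hfbardef
  have hfmon : fbar.Monic := by
    have := monic_X_pow_sub_C (1 : B) hn.ne'
    rwa [map_one] at this
  have hmap : F.map φ = fbar := by
    rw [hFdef, Polynomial.map_sub, Polynomial.map_pow, map_X, Polynomial.map_one]
  -- n is invertible mod p
  have hnne : (n : B) ≠ 0 := by
    intro h
    have hdvd : p ∣ n := (ZMod.natCast_eq_zero_iff n p).mp h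
    have : p ∣ Nat.gcd n p := Nat.dvd_gcd hdvd dvd_rfl
    rw [hcop] at this
    exact (Fact.out : p.Prime).ne_one (Nat.dvd_one.mp this)
  have hsf : Squarefree fbar := by
    have hsep : (X ^ n - C (1 : B)).Separable := separable_X_pow_sub_C 1 hnne one_ne_zero
    rw [map_one] at hsep
    exact hsep.squarefree
  have hfbar0 : fbar ≠ 0 := hfmon.ne_zero
  -- factor fbar
  set L : List B[X] := (UniqueFactorizationMonoid.normalizedFactors fbar).toList with hL
  have hmemL : ∀ g ∈ L, g ∈ UniqueFactorizationMonoid.normalizedFactors fbar := by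
    intro g hg; rwa [← Multiset.mem_toList]
  have hirr : ∀ g ∈ L, Irreducible g := fun g hg =>
    UniqueFactorizationMonoid.irreducible_of_normalized_factor g (hmemL g hg)
  have hmonL : ∀ g ∈ L, g.Monic := by
    intro g hg
    have h0 : g ≠ 0 := (hirr g hg).ne_zero
    have := Polynomial.monic_normalize h0
    rwa [UniqueFactorizationMonoid.normalize_normalized_factor g (hmemL g hg)] at this
  have hprodL : L.prod = fbar := by
    have hassoc := UniqueFactorizationMonoid.prod_normalizedFactors hfbar0
    rw [hL, Multiset.prod_toList]
    exact Polynomial.eq_of_monic_of_associated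
      (by rw [← Multiset.prod_toList]; exact monic_list_prod hmonL) hfmon hassoc
  have hnodup : L.Nodup := by
    have := (UniqueFactorizationMonoid.squarefree_iff_nodup_normalizedFactors hfbar0).mp hsf
    rwa [hL, ← Multiset.coe_nodup, Multiset.coe_toList]
  have hpairco : ∀ g ∈ L, ∀ h ∈ L, g ≠ h → IsCoprime g h := by
    intro g hg h hh hne
    rw [(hirr g hg).coprime_iff_not_dvd]
    intro hdvd
    have hassoc := (hirr g hg).associated_of_dvd (hirr h hh) hdvd
    have : normalize g = normalize h := normalize_eq_normalize hassoc.dvd hassoc.symm.dvd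
    rw [UniqueFactorizationMonoid.normalize_normalized_factor g (hmemL g hg),
      UniqueFactorizationMonoid.normalize_normalized_factor h (hmemL h hh)] at this
    exact hne this
  have hpair : L.Pairwise IsCoprime :=
    List.Pairwise.imp_of_mem (fun ha hb hne => hpairco _ ha _ hb hne) hnodup
  -- lift the factorization
  obtain ⟨M, hM, hFprod⟩ := hensel_list φ hsur (s + 2) hker L F hF hmonL hpair
    (by rw [hmap, hprodL])
  obtain ⟨hlen, hpt⟩ := List.forall₂_iff_get.mp hM
  refine ⟨M.length, ?_, fun l => M.get l, fun l => (hpt l.1 l.2 (hlen ▸ l.2)).1, ?_, ?_, ?_⟩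
  · -- positivity
    rcases Nat.eq_zero_or_pos M.length with h0 | h
    · exfalso
      have hM0 : M = [] := List.length_eq_zero_iff.mp h0
      rw [hM0] at hFprod
      have : F.natDegree = 0 := by rw [hFprod, List.prod_nil, natDegree_one]
      rw [hFdef] at this
      have hFn : (X ^ n - 1 : A[X]).natDegree = n := by
        have := natDegree_X_pow_sub_C (n := n) (r := (1 : A))
        rwa [map_one] at this
      omega
    · exact h
  · -- irreducibility of reductions
    intro l
    have := (hpt l.1 l.2 (hlen ▸ l.2)).2
    rw [this]
    exact hirr _ (List.get_mem L _)
  · -- pairwise Bézout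
    intro l l' hne
    apply bezout_lift φ hsur hnil
    rw [(hpt l.1 l.2 (hlen ▸ l.2)).2, (hpt l'.1 l'.2 (hlen ▸ l'.2)).2]
    have hco : ∀ i j : Fin L.length, i ≠ j → IsCoprime (L.get i) (L.get j) := by
      intro i j hij
      exact hpairco _ (List.get_mem L _) _ (List.get_mem L _)
        (fun h => hij (Fin.ext ((List.nodup_iff_injective_get.mp hnodup h) ▸ rfl)))
    have hij : (⟨l.1, hlen ▸ l.2⟩ : Fin L.length) ≠ ⟨l'.1, hlen ▸ l'.2⟩ := by
      intro h
      apply hne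
      apply Fin.ext
      simpa using congrArg Fin.val h
    exact hco _ _ hij
  · -- the product
    rw [hFprod, ← List.prod_ofFn (f := fun l => M.get l), List.ofFn_get]
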